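/- Let (M̄, g) be an oriented, compact Riemannian 3-manifold with boundary. The helicity 𝓗(ω) = (ω, ⋆Ω̃)_{L²} of ω ∈ Ω¹_n(M̄) is well-defined, i.e. independent of the choice of 2-form Ω̃ with δΩ̃ = ω: if δΩ̃ = δΩ = ω and n(Ω) = 0, then (ω, ⋆Ω̃)_{L²} = (ω, ⋆Ω)_{L²}. -/
import Mathlib

/-- Well-definedness of helicity: for `ω ∈ Ω¹_n`, the value `(ω, ⋆Ω̃)_{L²}` does not
depend on the choice of 2-form potential `Ω̃` with `δΩ̃ = ω`.  The de Rham data of an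
oriented compact Riemannian 3-manifold with boundary is axiomatised; `green` is
Green's formula with vanishing boundary term when `n(Ω) = 0`, `hsd` records
`d(⋆Ξ) = ⋆(δΞ)` and `hStarAdj` that the Hodge star is an L² isometry. -/
theorem helicity_well_defined {Ω1 Ω2 bΩ2 : Type*}
    [AddCommGroup Ω1] [Module ℝ Ω1] [AddCommGroup Ω2] [Module ℝ Ω2]
    [AddCommGroup bΩ2] [Module ℝ bΩ2]
    (d1 : Ω1 →ₗ[ℝ] Ω2) (δ2 : Ω2 →ₗ[ℝ] Ω1)
    (starA : Ω2 →ₗ[ℝ] Ω1) (starB : Ω1 →ₗ[ℝ] Ω2) (n2 : Ω2 →ₗ[ℝ] bΩ2)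
    (inner1 : Ω1 →ₗ[ℝ] Ω1 →ₗ[ℝ] ℝ) (inner2 : Ω2 →ₗ[ℝ] Ω2 →ₗ[ℝ] ℝ)
    (green : ∀ (Ω : Ω2) (η : Ω1), n2 Ω = 0 → inner1 (δ2 Ω) η = inner2 Ω (d1 η))
    (hsd : ∀ Ξ : Ω2, d1 (starA Ξ) = starB (δ2 Ξ))
    (hStarAdj : ∀ (Ξ : Ω2) (z : Ω1), inner2 Ξ (starB z) = inner1 (starA Ξ) z)
    (ω : Ω1) (Ω Ωt : Ω2) (hΩ : δ2 Ω = ω) (hn : n2 Ω = 0) (hΩt : δ2 Ωt = ω) :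
    inner1 ω (starA Ωt) = inner1 ω (starA Ω) := by
  rw [← hΩ, green Ω _ hn, green Ω _ hn, hsd, hsd, hΩ, hΩt]
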